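/- Let x ∈ F_q^{n×m}, X = [I_n | x] ∈ F_q^{n×(n+m)}, and let Y = [Â | y] ∈ F_q^{N×(n+m)} with Â ∈ F_q^{N×n}, y ∈ F_q^{N×m}, and rank Y = N. Set μ = n − rank Â and δ = N − rank Â. Then d_S(⟨X⟩, ⟨Y⟩) = 2·rank(y − Âx) + μ − δ. -/

import Mathlib

/-- The row space of a matrix: the span of its rows. -/
noncomputable def rowSpace {F : Type*} [Field F] {ι κ : Type*}
    (M : Matrix ι κ F) : Submodule F (κ → F) :=
  Submodule.span F (Set.range fun i => M i)

/-- The subspace distance `d_S(U,V) = dim(U + V) - dim(U ∩ V)`. -/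
noncomputable def sDist {F : Type*} [Field F] {κ : Type*}
    (U V : Submodule F (κ → F)) : ℕ :=
  Module.finrank F ↥(U ⊔ V) - Module.finrank F ↥(U ⊓ V)

open Matrix in
/-- for `X = [I | x]` and `Y = [Ahat | y] ∈ F_q^{N×(n+m)}` with
`rank Y = N`, `μ = n − rank Ahat` and `δ = N − rank Ahat`, one has
`d_S(⟨X⟩, ⟨Y⟩) = 2·rank(y − Ahat·x) + μ − δ`. -/
theorem sDist_lifting_general
    {F : Type*} [Field F] [Fintype F] [DecidableEq F] {n m N : ℕ} {μ δ : ℕ}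
    (x : Matrix (Fin n) (Fin m) F)
    (Ahat : Matrix (Fin N) (Fin n) F) (y : Matrix (Fin N) (Fin m) F)
    (Y : Matrix (Fin N) (Fin n ⊕ Fin m) F)
    (hY : Y = Matrix.fromCols Ahat y) (hrank : Y.rank = N)
    (hμ : μ = n - Ahat.rank) (hδ : δ = N - Ahat.rank) :
    (sDist (rowSpace (Matrix.fromCols (1 : Matrix (Fin n) (Fin n) F) x))
        (rowSpace Y) : ℤ)
      = 2 * ((y - Ahat * x).rank : ℤ) + (μ : ℤ) - (δ : ℤ) := by
  subst hY hμ hδ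
  set X : Matrix (Fin n) (Fin n ⊕ Fin m) F := Matrix.fromCols 1 x with hX
  set Yy : Matrix (Fin N) (Fin n ⊕ Fin m) F := Matrix.fromCols Ahat y with hYy
  have hrowX : rowSpace X = LinearMap.range X.vecMulLinear :=
    (range_vecMulLinear X).symm
  have hrowY : rowSpace Yy = LinearMap.range Yy.vecMulLinear :=
    (range_vecMulLinear Yy).symm
  set U := rowSpace X with hU
  set V := rowSpace Yy with hV
  -- finrank U = n
  have hLinj : Function.Injective X.vecMulLinear := by
    intro a b hab
    have : ∀ j, (a ᵥ* X) (Sum.inl j) = (b ᵥ* X) (Sum.inl j) := by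
      intro j
      simp only [Matrix.vecMulLinear_apply] at hab
      rw [hab]
    funext j
    have h := this j
    simp [hX, Matrix.vecMul_fromCols, Matrix.vecMul_one] at h
    exact h
  have hdimU : Module.finrank F U = n := by
    rw [hrowX, LinearMap.finrank_range_of_inj hLinj, Module.finrank_pi]
    simp
  -- finrank V = N
  have hdimV : Module.finrank F V = N := by
    rw [hrowY]
    rw [range_vecMulLinear]
    rw [← Matrix.rank_eq_finrank_span_row]
    exact hrank
  -- φ := Yy.vecMulLinear injective
  have hφinj : Function.Injective Yy.vecMulLinear := by
    rw [← LinearMap.ker_eq_bot]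
    have h1 := LinearMap.finrank_range_add_finrank_ker Yy.vecMulLinear
    rw [← hrowY, hdimV, Module.finrank_pi] at h1
    simp only [Fintype.card_fin] at h1
    have : Module.finrank F (LinearMap.ker Yy.vecMulLinear) = 0 := by omega
    exact Submodule.finrank_eq_zero.mp this
  -- comap φ U = ker (y - Ahat*x).vecMulLinear
  have hcomap : Submodule.comap Yy.vecMulLinear U
      = LinearMap.ker (y - Ahat * x).vecMulLinear := by
    ext c
    simp only [Submodule.mem_comap, LinearMap.mem_ker, Matrix.vecMulLinear_apply]
    have hcY : c ᵥ* Yy = Sum.elim (c ᵥ* Ahat) (c ᵥ* y) := by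
      rw [hYy, Matrix.vecMul_fromCols]
    constructor
    · intro hc
      rw [hrowX] at hc
      obtain ⟨a, ha⟩ := hc
      simp only [Matrix.vecMulLinear_apply, hX, Matrix.vecMul_fromCols,
        Matrix.vecMul_one] at ha
      rw [hcY] at ha
      have h1 : a = c ᵥ* Ahat := by
        funext j; exact congrFun ha (Sum.inl j)
      have h2 : a ᵥ* x = c ᵥ* y := by
        funext j; exact congrFun ha (Sum.inr j)
      rw [Matrix.vecMul_sub, ← Matrix.vecMul_vecMul, ← h1, h2, sub_self]
    · intro hc
      rw [Matrix.vecMul_sub, sub_eq_zero, ← Matrix.vecMul_vecMul] at hc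
      rw [hrowX]
      refine ⟨c ᵥ* Ahat, ?_⟩
      simp only [Matrix.vecMulLinear_apply, hX, Matrix.vecMul_fromCols,
        Matrix.vecMul_one]
      rw [hcY, ← hc]
  -- finrank (U ⊓ V) = N - ρ, i.e. finrank (U ⊓ V) + ρ = N
  have hinf : U ⊓ V = Submodule.map Yy.vecMulLinear
      (Submodule.comap Yy.vecMulLinear U) := by
    rw [Submodule.map_comap_eq, ← hrowY, inf_comm]
  have hdimInf : Module.finrank F ↥(U ⊓ V) + (y - Ahat * x).rank = N := by
    rw [hinf]
    rw [(Submodule.equivMapOfInjective _ hφinj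
      (Submodule.comap Yy.vecMulLinear U)).finrank_eq.symm]
    rw [hcomap]
    have h1 := LinearMap.finrank_range_add_finrank_ker (y - Ahat * x).vecMulLinear
    rw [range_vecMulLinear, ← Matrix.rank_eq_finrank_span_row,
      Module.finrank_pi] at h1
    simp only [Fintype.card_fin] at h1
    omega
  have hsup : Module.finrank F ↥(U ⊔ V) + Module.finrank F ↥(U ⊓ V) = n + N :=
    by rw [Submodule.finrank_sup_add_finrank_inf_eq, hdimU, hdimV]
  -- rank bounds
  have hrn : Ahat.rank ≤ n := Matrix.rank_le_width Ahat
  have hrN : Ahat.rank ≤ N := Matrix.rank_le_height Ahat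
  have hρN : (y - Ahat * x).rank ≤ N := by omega
  have hinfle : Module.finrank F ↥(U ⊓ V) ≤ Module.finrank F ↥(U ⊔ V) :=
    Submodule.finrank_mono (le_trans inf_le_left le_sup_left)
  unfold sDist
  push_cast [Nat.cast_sub hinfle, Nat.cast_sub hrn, Nat.cast_sub hrN]
  have e1 : (Module.finrank F ↥(U ⊔ V) : ℤ) + Module.finrank F ↥(U ⊓ V) = n + N := by
    exact_mod_cast congrArg (Nat.cast : ℕ → ℤ) hsup
  have e2 : (Module.finrank F ↥(U ⊓ V) : ℤ) + (y - Ahat * x).rank = N := by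
    exact_mod_cast congrArg (Nat.cast : ℕ → ℤ) hdimInf
  linarith
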